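/- arXiv:2110.02400 — 6 statements merged into one kernel-verified Lean document; each statement's English description precedes it below -/
import Mathlib

section
/- Let β = 0.89. For all z ∈ [0,1], (1/β)(e^{β(z-1)} - e^{-β}) + ((1 - e^{-β})/β)(1 - z) ≥ 0.5893. -/
lemma E_bounds :
    Real.exp (-(89/100)) ∈ Set.Icc (410655751711/1000000000000 : ℝ)
      (410655752829/1000000000000) := by
  have h := Real.exp_bound (x := -(89/100)) (by rw [abs_le]; norm_num) (n := 12) (by norm_num)
  have habs : |(-(89/100) : ℝ)| = 89/100 := by
    rw [abs_neg]; exact abs_of_nonneg (by norm_num)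
  rw [habs, abs_le] at h
  simp only [Finset.sum_range_succ, Finset.sum_range_zero, Nat.factorial] at h
  norm_num at h
  constructor <;> nlinarith [h.1, h.2]

lemma A_bounds :
    Real.exp (-(20610531/50000000)) ∈ Set.Icc (331092396001/500000000000 : ℝ)
      (662184792003/1000000000000) := by
  have h := Real.exp_bound (x := -(20610531/50000000)) (by rw [abs_le]; norm_num)
    (n := 12) (by norm_num)
  have habs : |(-(20610531/50000000) : ℝ)| = 20610531/50000000 := by
    rw [abs_neg]; exact abs_of_nonneg (by norm_num)
  rw [habs, abs_le] at h
  simp only [Finset.sum_range_succ, Finset.sum_range_zero, Nat.factorial] at h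
  norm_num at h
  constructor <;> nlinarith [h.1, h.2]

theorem stmt_3 (β : ℝ) (hβ : β = 0.89) (z : ℝ) (hz : z ∈ Set.Icc (0:ℝ) 1) :
    (1 / β) * (Real.exp (β * (z - 1)) - Real.exp (-β))
      + ((1 - Real.exp (-β)) / β) * (1 - z) ≥ 0.5893 := by
  obtain ⟨hz0, hz1⟩ := hz
  subst hβ
  rw [show (0.89:ℝ) = 89/100 from by norm_num, show (0.5893:ℝ) = 5893/10000 from by norm_num]
  set E := Real.exp (-(89/100 : ℝ)) with hE
  set A := Real.exp (-(20610531/50000000 : ℝ)) with hA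
  obtain ⟨hE1, hE2⟩ := E_bounds
  obtain ⟨hA1, hA2⟩ := A_bounds
  have htan : Real.exp ((89/100:ℝ) * (z - 1)) ≥ A * (1 + ((89/100) * (z - 1) + 20610531/50000000)) := by
    have h1 : Real.exp ((89/100:ℝ) * (z - 1)) =
        A * Real.exp ((89/100) * (z - 1) + 20610531/50000000) := by
      rw [hA, ← Real.exp_add]; ring_nf
    rw [h1]
    have h2 := Real.add_one_le_exp ((89/100:ℝ) * (z - 1) + 20610531/50000000)
    nlinarith [Real.exp_pos (-(20610531/50000000 : ℝ))]
  have p1 : 0 ≤ (A - 331092396001/500000000000) * z :=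
    mul_nonneg (by linarith) hz0
  have p2 : 0 ≤ (E - 410655751711/1000000000000) * z :=
    mul_nonneg (by linarith) hz0
  have hElt1 : E ≤ 1 := by linarith
  rw [ge_iff_le]
  calc (5893/10000 : ℝ)
      ≤ (1/(89/100)) * (A * (1 + ((89/100) * (z - 1) + 20610531/50000000)) - E)
        + ((1 - E)/(89/100)) * (1 - z) := by
        have h : (1/(89/100):ℝ) = 100/89 := by norm_num
        rw [h]
        have h' : ((1 - E)/(89/100):ℝ) = (1-E) * (100/89) := by ring
        rw [h']
        linarith
    _ ≤ (1/(89/100)) * (Real.exp ((89/100) * (z - 1)) - E)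
        + ((1 - E)/(89/100)) * (1 - z) := by
        have : (0:ℝ) < 1/(89/100) := by norm_num
        nlinarith [htan]
end

section
/- Let β ∈ (0,1], g(x) = e^{β(x-1)}, G(x) = (1/β)e^{β(x-1)}, and f(z₁,z₂,x) = G(z₂) - G(z₁) + (1-g(x))(1-z₁) + (1-z₂)(G(x) - G(0)) + z₁(1 - g(0)). If 0 ≤ z₁ ≤ z₂ ≤ 1, x ∈ [0,1], and 1 - z₂ ≥ β(1 - z₁), then f(z₁,z₂,x) ≥ 1 - e^{-β}. -/
theorem stmt_7 (β : ℝ) (hβ : 0 < β) (hβ1 : β ≤ 1)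
    (g G : ℝ → ℝ)
    (hg : ∀ x, g x = Real.exp (β * (x - 1)))
    (hG : ∀ x, G x = (1 / β) * Real.exp (β * (x - 1)))
    (f : ℝ → ℝ → ℝ → ℝ)
    (hf : ∀ z₁ z₂ x, f z₁ z₂ x = G z₂ - G z₁ + (1 - g x) * (1 - z₁)
      + (1 - z₂) * (G x - G 0) + z₁ * (1 - g 0))
    (z₁ z₂ x : ℝ) (h0 : 0 ≤ z₁) (h12 : z₁ ≤ z₂) (h21 : z₂ ≤ 1)
    (hx : x ∈ Set.Icc (0:ℝ) 1) (hcase : 1 - z₂ ≥ β * (1 - z₁)) :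
    f z₁ z₂ x ≥ 1 - Real.exp (-β) := by
  obtain ⟨hx0, hx1⟩ := hx
  rw [hf, hg, hg, hG, hG, hG, hG]
  have h3 : β * (0 - 1) = -β := by ring
  rw [h3]
  have h1 : Real.exp (β * (z₁ - 1)) ≤ Real.exp (β * (z₂ - 1)) := by
    apply Real.exp_le_exp.2; nlinarith
  have h2 : Real.exp (-β) ≤ Real.exp (β * (x - 1)) := by
    apply Real.exp_le_exp.2; nlinarith
  have hinv : β * (1 / β) = 1 := by field_simp
  have hu : (0:ℝ) ≤ 1 / β := le_of_lt (one_div_pos.2 hβ)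
  have hid : 1 / β * Real.exp (β * (z₂ - 1)) - 1 / β * Real.exp (β * (z₁ - 1))
      + (1 - Real.exp (β * (x - 1))) * (1 - z₁)
      + (1 - z₂) * (1 / β * Real.exp (β * (x - 1)) - 1 / β * Real.exp (-β))
      + z₁ * (1 - Real.exp (-β))
      = 1 - Real.exp (-β)
        + 1 / β * (Real.exp (β * (z₂ - 1)) - Real.exp (β * (z₁ - 1)))
        + 1 / β * ((Real.exp (β * (x - 1)) - Real.exp (-β)) * ((1 - z₂) - β * (1 - z₁))) := by
    field_simp
    ring
  rw [hid]
  have hk1 : 0 ≤ 1 / β * (Real.exp (β * (z₂ - 1)) - Real.exp (β * (z₁ - 1))) :=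
    mul_nonneg hu (by linarith)
  have hk2 : 0 ≤ 1 / β * ((Real.exp (β * (x - 1)) - Real.exp (-β)) * ((1 - z₂) - β * (1 - z₁))) :=
    mul_nonneg hu (mul_nonneg (by linarith) (by linarith))
  linarith
end

section
/- Let β ∈ (0,1], g(x) = e^{β(x-1)}, G(x) = (1/β)e^{β(x-1)}, and f(z₁,z₂,x) = G(z₂) - G(z₁) + (1-g(x))(1-z₁) + (1-z₂)(G(x) - G(0)) + z₁(1 - g(0)). If 0 ≤ z₁ ≤ z₂ ≤ 1, x ∈ [0,1], and 1 - z₂ < β(1 - z₁), then f(z₁,z₂,x) ≥ min{ (1/β)(e^{β(z₂-1)} - e^{-β}) + ((1-e^{-β})/β)(1-z₂), 1 - e^{-β} }. -/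
theorem stmt_8 (β : ℝ) (hβ : 0 < β) (hβ1 : β ≤ 1)
    (g G : ℝ → ℝ)
    (hg : ∀ x, g x = Real.exp (β * (x - 1)))
    (hG : ∀ x, G x = (1 / β) * Real.exp (β * (x - 1)))
    (f : ℝ → ℝ → ℝ → ℝ)
    (hf : ∀ z₁ z₂ x, f z₁ z₂ x = G z₂ - G z₁ + (1 - g x) * (1 - z₁)
      + (1 - z₂) * (G x - G 0) + z₁ * (1 - g 0))
    (z₁ z₂ x : ℝ) (h0 : 0 ≤ z₁) (h12 : z₁ ≤ z₂) (h21 : z₂ ≤ 1)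
    (hx : x ∈ Set.Icc (0:ℝ) 1) (hcase : 1 - z₂ < β * (1 - z₁)) :
    f z₁ z₂ x ≥ min
      ((1 / β) * (Real.exp (β * (z₂ - 1)) - Real.exp (-β))
        + ((1 - Real.exp (-β)) / β) * (1 - z₂))
      (1 - Real.exp (-β)) := by
  obtain ⟨hx0, hx1⟩ := hx
  have hβne : β ≠ 0 := ne_of_gt hβ
  -- z₂ = 0 is impossible
  rcases eq_or_lt_of_le (le_trans h0 h12) with hz2 | hz2
  · exfalso
    have hz1 : z₁ = 0 := le_antisymm (hz2 ▸ h12) h0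
    rw [← hz2, hz1] at hcase
    nlinarith
  -- notation
  have hfval : f z₁ z₂ x = (Real.exp (β*(z₂-1)) - Real.exp (β*(z₁-1))) / β
      + (1 - Real.exp (β*(x-1))) * (1 - z₁)
      + (1 - z₂) * ((Real.exp (β*(x-1)) - Real.exp (-β)) / β)
      + z₁ * (1 - Real.exp (-β)) := by
    rw [hf z₁ z₂ x, hg x, hg 0, hG z₂, hG z₁, hG x, hG 0,
        show β*((0:ℝ)-1) = -β by ring]
    field_simp
  have hEx1 : Real.exp (β*(x-1)) ≤ 1 := by
    have : β*(x-1) ≤ 0 := by nlinarith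
    simpa using Real.exp_le_exp.mpr this
  have hA1 : Real.exp (-β) ≤ 1 := by
    have : -β ≤ (0:ℝ) := by linarith
    simpa using Real.exp_le_exp.mpr this
  -- convexity of exp
  have hconv : z₂ * Real.exp (β*(z₁-1)) ≤
      (z₂ - z₁) * Real.exp (-β) + z₁ * Real.exp (β*(z₂-1)) := by
    have ht0 : 0 ≤ z₁ / z₂ := div_nonneg h0 hz2.le
    have ht1 : 0 ≤ 1 - z₁ / z₂ := by
      have : z₁ / z₂ ≤ 1 := (div_le_one hz2).mpr h12
      linarith
    have hsum : (1 - z₁/z₂) + z₁/z₂ = 1 := by ring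
    have hc := convexOn_exp.2 (Set.mem_univ (-β)) (Set.mem_univ (β*(z₂-1))) ht1 ht0 hsum
    simp only [smul_eq_mul] at hc
    have harg : (1 - z₁/z₂) * (-β) + (z₁/z₂) * (β*(z₂-1)) = β*(z₁-1) := by
      field_simp
      ring
    rw [harg] at hc
    have := mul_le_mul_of_nonneg_left hc hz2.le
    have heq : z₂ * ((1 - z₁/z₂) * Real.exp (-β) + (z₁/z₂) * Real.exp (β*(z₂-1)))
        = (z₂ - z₁) * Real.exp (-β) + z₁ * Real.exp (β*(z₂-1)) := by
      field_simp
    linarith [heq ▸ this]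
  have hstep : 0 ≤ (1 - Real.exp (β*(x-1))) * (β*(1-z₁) - (1-z₂)) :=
    mul_nonneg (by linarith) (by linarith)
  set M₁ := (1 / β) * (Real.exp (β * (z₂ - 1)) - Real.exp (-β))
        + ((1 - Real.exp (-β)) / β) * (1 - z₂) with hM₁
  set M₂ := 1 - Real.exp (-β) with hM₂
  have c1 : β * min M₁ M₂ ≤ (Real.exp (β*(z₂-1)) - Real.exp (-β))
      + (1 - Real.exp (-β)) * (1 - z₂) := by
    have h1 : min M₁ M₂ ≤ M₁ := min_le_left _ _
    have h2 : β * min M₁ M₂ ≤ β * M₁ := mul_le_mul_of_nonneg_left h1 hβ.le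
    have h3 : β * M₁ = (Real.exp (β*(z₂-1)) - Real.exp (-β))
      + (1 - Real.exp (-β)) * (1 - z₂) := by
      rw [hM₁]; field_simp; rw [hM₂]; ring
    linarith
  have c2 : β * min M₁ M₂ ≤ β * (1 - Real.exp (-β)) :=
    mul_le_mul_of_nonneg_left (min_le_right _ _) hβ.le
  -- the polynomial core, multiplied by z₂
  set P := (Real.exp (β*(z₂-1)) - Real.exp (β*(z₁-1)))
      + β * ((1 - Real.exp (β*(x-1))) * (1 - z₁))
      + (1 - z₂) * (Real.exp (β*(x-1)) - Real.exp (-β))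
      + β * (z₁ * (1 - Real.exp (-β))) with hP
  have hz2P : z₂ * (β * min M₁ M₂) ≤ z₂ * P := by
    have h1 := mul_le_mul_of_nonneg_left c1 (by linarith : (0:ℝ) ≤ z₂ - z₁)
    have h2 := mul_le_mul_of_nonneg_left c2 h0
    have h4 := mul_nonneg (le_of_lt hz2) hstep
    have h5 : 0 ≤ (1-z₂) * ((1 - Real.exp (-β)) * (z₁ * (1-β))) := by
      apply mul_nonneg (by linarith)
      apply mul_nonneg (by linarith)
      exact mul_nonneg h0 (by linarith)
    rw [hP]
    nlinarith [hconv, h1, h2, h4, h5]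
  have hPmin : β * min M₁ M₂ ≤ β * f z₁ z₂ x := by
    have h6 : β * f z₁ z₂ x = P := by
      rw [hfval, hP]; field_simp; ring
    have h7 : β * min M₁ M₂ ≤ P := le_of_mul_le_mul_left hz2P hz2
    linarith
  exact le_of_mul_le_mul_left hPmin hβ
end

section
/- Let β = 0.89, g(x) = e^{β(x-1)}, G(x) = (1/β)e^{β(x-1)}, and f(z₁,z₂,x) = G(z₂) - G(z₁) + (1-g(x))(1-z₁) + (1-z₂)(G(x) - G(0)) + z₁(1 - g(0)). Then for all 0 ≤ z₁ ≤ z₂ ≤ 1 and x ∈ [0,1], f(z₁,z₂,x) ≥ 0.589. -/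
open Real

lemma exp89_lb : (2.435048:ℝ) ≤ Real.exp 0.89 := by
  have h := Real.sum_le_exp_of_nonneg (x := 0.89) (by norm_num) 9
  refine le_trans ?_ h
  norm_num [Finset.sum_range_succ, Nat.factorial]

lemma exp412_ub : Real.exp 0.412248 ≤ 1.51030 := by
  have h := Real.exp_bound (x := (0.412248:ℝ)) (by rw [abs_of_nonneg] <;> norm_num)
    (n := 6) (by norm_num)
  rw [abs_of_nonneg (by norm_num : (0:ℝ) ≤ 0.412248)] at h
  have h1 := (abs_le.mp h).2
  norm_num [Finset.sum_range_succ, Nat.factorial] at h1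
  linarith

lemma expm89_ub : Real.exp (-(0.89:ℝ)) ≤ 0.41067 := by
  rw [Real.exp_neg, inv_le_comm₀ (Real.exp_pos _) (by norm_num)]
  calc (0.41067:ℝ)⁻¹ ≤ 2.435048 := by norm_num
    _ ≤ Real.exp 0.89 := exp89_lb

lemma expm412_lb : (0.66205:ℝ) ≤ Real.exp (-(0.412248:ℝ)) := by
  rw [Real.exp_neg, le_inv_comm₀ (by norm_num) (Real.exp_pos _)]
  calc Real.exp 0.412248 ≤ 1.51030 := exp412_ub
    _ ≤ (0.66205:ℝ)⁻¹ := by norm_num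

lemma chord_exp {a b : ℝ} (h0 : 0 ≤ a) (hab : a ≤ b) :
    b * Real.exp (0.89*(a-1)) ≤ (b-a) * Real.exp (0.89*((0:ℝ)-1)) + a * Real.exp (0.89*(b-1)) := by
  rcases eq_or_lt_of_le (h0.trans hab) with hb | hb
  · have ha : a = 0 := le_antisymm (hab.trans hb.symm.le) h0
    simp [ha, ← hb]
  · have key : Real.exp ((b-a)/b * (0.89*((0:ℝ)-1)) + a/b * (0.89*(b-1))) ≤
        (b-a)/b * Real.exp (0.89*((0:ℝ)-1)) + a/b * Real.exp (0.89*(b-1)) := by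
      have := convexOn_exp.2 (Set.mem_univ (0.89*((0:ℝ)-1))) (Set.mem_univ (0.89*(b-1)))
        (div_nonneg (by linarith) hb.le) (div_nonneg h0 hb.le)
        (show (b-a)/b + a/b = 1 by field_simp; ring)
      simpa using this
    have harg : (b-a)/b * (0.89*((0:ℝ)-1)) + a/b * (0.89*(b-1)) = 0.89*(a-1) := by
      field_simp; ring
    rw [harg] at key
    have h2 := mul_le_mul_of_nonneg_left key hb.le
    calc b * Real.exp (0.89*(a-1))
        ≤ b * ((b-a)/b * Real.exp (0.89*((0:ℝ)-1)) + a/b * Real.exp (0.89*(b-1))) := h2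
      _ = (b-a) * Real.exp (0.89*((0:ℝ)-1)) + a * Real.exp (0.89*(b-1)) := by field_simp

lemma tangent_exp (z : ℝ) :
    Real.exp (-(0.412248:ℝ)) * (1 + 0.89*(z - 0.5368)) ≤ Real.exp (0.89*(z-1)) := by
  have h := Real.add_one_le_exp (0.89*(z - 0.5368))
  have heq : Real.exp (0.89*(z-1)) = Real.exp (-(0.412248:ℝ)) * Real.exp (0.89*(z-0.5368)) := by
    rw [← Real.exp_add]; ring_nf
  rw [heq]
  have := mul_le_mul_of_nonneg_left h (Real.exp_pos (-(0.412248:ℝ))).le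
  linarith

set_option maxHeartbeats 1000000 in
lemma key_ineq (z₁ z₂ P1 P2 Px E : ℝ) (h1 : 0 ≤ z₁) (h12 : z₁ ≤ z₂) (h21 : z₂ ≤ 1)
    (hE : E ≤ 0.41067) (hEpos : 0 < E) (hPx1 : Px ≤ 1) (hEPx : E ≤ Px) (hP12 : P1 ≤ P2)
    (htan : 0.66205 * (1 + 0.89*(z₂-0.5368)) ≤ P2)
    (hchord : z₂*P1 ≤ (z₂-z₁)*E + z₁*P2) :
    1/0.89*P2 - 1/0.89*P1 + (1-Px)*(1-z₁) + (1-z₂)*(1/0.89*Px - 1/0.89*E) + z₁*(1-E)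
      ≥ 0.589 := by
  have hz20 : (0:ℝ) ≤ z₂ := h1.trans h12
  rcases le_or_gt (0.89*(1-z₁)) (1-z₂) with hA | hA
  · -- x → 0 direction
    have hq : 0 ≤ (Px - E)*((1-z₂) - 0.89*(1-z₁)) := mul_nonneg (by linarith) (by linarith)
    rw [ge_iff_le, ← sub_nonneg]
    have hid : 1/0.89*P2 - 1/0.89*P1 + (1-Px)*(1-z₁) + (1-z₂)*(1/0.89*Px - 1/0.89*E) + z₁*(1-E) - 0.589
        = ((P2-P1) + 0.89*(1-E-0.589) + (Px - E)*((1-z₂) - 0.89*(1-z₁)))/0.89 := by ring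
    rw [hid]
    apply div_nonneg _ (by norm_num)
    nlinarith [hq, hP12, hE]
  · -- x → 1 direction
    have htan' : 0.66205 + 0.5892245*z₂ - 0.3162957116 ≤ P2 := by nlinarith [htan]
    have hq' : 0 ≤ 0.41067 - E - 0.41067*z₂ + z₂*E := by
      nlinarith [mul_nonneg (by linarith : (0:ℝ) ≤ 1-z₂) (by linarith : (0:ℝ) ≤ 0.41067-E)]
    have hF0 : (P2-E)/0.89 + (1-z₂)*(1-E)/0.89 ≥ 0.589 := by
      rw [ge_iff_le, ← add_div, le_div_iff₀ (by norm_num : (0:ℝ) < 0.89)]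
      nlinarith [hq', htan', hE, h21]
    have hFz : (1-z₂)*(1-E)/0.89 + z₂*(1-E) ≥ 0.589 := by
      rw [ge_iff_le, ← sub_nonneg]
      have hid : (1-z₂)*(1-E)/0.89 + z₂*(1-E) - 0.589
          = ((1-z₂)*(1-E) + 0.89*(z₂*(1-E)) - 0.589*0.89)/0.89 := by ring
      rw [hid]
      apply div_nonneg _ (by norm_num)
      nlinarith [hq', hE]
    have hF : (P2 - P1)/0.89 + (1-z₂)*(1-E)/0.89 + z₁*(1-E) ≥ 0.589 := by
      rcases eq_or_lt_of_le hz20 with hz2 | hz2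
      · have hz1 : z₁ = 0 := le_antisymm (h12.trans hz2.symm.le) h1
        rw [hz1, ← hz2]
        have hd : (1-E)/0.89 ≥ 0.589 := by
          rw [ge_iff_le, le_div_iff₀ (by norm_num : (0:ℝ) < 0.89)]
          linarith
        have h2 : 0 ≤ (P2 - P1)/0.89 := div_nonneg (by linarith) (by norm_num)
        nlinarith [hd, h2]
      · have hq1 : 0 ≤ (z₂ - z₁) * ((P2-E)/0.89 + (1-z₂)*(1-E)/0.89 - 0.589) :=
          mul_nonneg (by linarith) (by linarith)
        have hq2 : 0 ≤ z₁ * ((1-z₂)*(1-E)/0.89 + z₂*(1-E) - 0.589) :=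
          mul_nonneg h1 (by linarith)
        have key : 0 ≤ z₂ * ((P2 - P1)/0.89 + (1-z₂)*(1-E)/0.89 + z₁*(1-E) - 0.589) := by
          have hcs : 0 ≤ ((z₂-z₁)*E + z₁*P2 - z₂*P1)/0.89 := div_nonneg (by linarith) (by norm_num)
          have hid : z₂ * ((P2 - P1)/0.89 + (1-z₂)*(1-E)/0.89 + z₁*(1-E) - 0.589)
              = (z₂ - z₁) * ((P2-E)/0.89 + (1-z₂)*(1-E)/0.89 - 0.589)
                + z₁ * ((1-z₂)*(1-E)/0.89 + z₂*(1-E) - 0.589)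
                + ((z₂-z₁)*E + z₁*P2 - z₂*P1)/0.89 := by ring
          rw [hid]
          linarith
        have := nonneg_of_mul_nonneg_right key hz2
        linarith
    have hq : 0 ≤ (1-Px)*(0.89*(1-z₁) - (1-z₂)) := mul_nonneg (by linarith) (by linarith)
    rw [ge_iff_le, ← sub_nonneg]
    have hid : 1/0.89*P2 - 1/0.89*P1 + (1-Px)*(1-z₁) + (1-z₂)*(1/0.89*Px - 1/0.89*E) + z₁*(1-E) - 0.589
        = ((P2 - P1)/0.89 + (1-z₂)*(1-E)/0.89 + z₁*(1-E) - 0.589)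
          + (1-Px)*(0.89*(1-z₁) - (1-z₂))/0.89 := by ring
    rw [hid]
    have hdiv := div_nonneg hq (by norm_num : (0:ℝ) ≤ 0.89)
    linarith [hF]

theorem stmt_9 (β : ℝ) (hβ : β = 0.89)
    (g G : ℝ → ℝ)
    (hg : ∀ x, g x = Real.exp (β * (x - 1)))
    (hG : ∀ x, G x = (1 / β) * Real.exp (β * (x - 1)))
    (f : ℝ → ℝ → ℝ → ℝ)
    (hf : ∀ z₁ z₂ x, f z₁ z₂ x = G z₂ - G z₁ + (1 - g x) * (1 - z₁)
      + (1 - z₂) * (G x - G 0) + z₁ * (1 - g 0)) :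
    ∀ z₁ z₂ x : ℝ, 0 ≤ z₁ → z₁ ≤ z₂ → z₂ ≤ 1 → x ∈ Set.Icc (0:ℝ) 1 →
      f z₁ z₂ x ≥ 0.589 := by
  intro z₁ z₂ x h1 h12 h21 hx
  obtain ⟨hx0, hx1⟩ := hx
  subst hβ
  simp only [hf, hg, hG]
  have hE : Real.exp (0.89*((0:ℝ)-1)) ≤ 0.41067 := by
    have harg : (0.89:ℝ)*((0:ℝ)-1) = -(0.89:ℝ) := by norm_num
    rw [harg]; exact expm89_ub
  have htan : 0.66205 * (1 + 0.89*(z₂ - 0.5368)) ≤ Real.exp (0.89*(z₂-1)) := by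
    have hlin : (0:ℝ) ≤ 1 + 0.89*(z₂ - 0.5368) := by linarith [h1.trans h12]
    calc (0.66205:ℝ) * (1 + 0.89*(z₂ - 0.5368))
        ≤ Real.exp (-(0.412248:ℝ)) * (1 + 0.89*(z₂ - 0.5368)) :=
          mul_le_mul_of_nonneg_right expm412_lb hlin
      _ ≤ Real.exp (0.89*(z₂-1)) := tangent_exp z₂
  exact key_ineq z₁ z₂ _ _ _ _ h1 h12 h21 hE (Real.exp_pos _)
    (Real.exp_le_one_iff.2 (by linarith)) (Real.exp_le_exp.2 (by linarith))
    (Real.exp_le_exp.2 (by linarith)) htan (chord_exp h1 h12)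
end

section
/- Let β = 1, g(x) = e^{x-1}, G(x) = e^{x-1}, and f(z₁,z₂,x) = G(z₂) - G(z₁) + (1-g(x))(1-z₁) + (1-z₂)(G(x) - G(0)) + z₁(1 - g(0)). Then for all 0 ≤ z₁ ≤ z₂ ≤ 1 and x ∈ [0,1], f(z₁,z₂,x) ≥ 0.554. -/
-- lower bound on exp(-0.4585)
lemma exp_neg_lb : Real.exp (-(917/2000 : ℝ)) ≥ 0.6322311 := by
  have hb := Real.exp_bound (x := -(917/2000 : ℝ)) (by rw [abs_neg, abs_of_nonneg] <;> norm_num)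
    (n := 8) (by norm_num)
  rw [abs_sub_le_iff] at hb
  have h := hb.2
  have habs : |(-(917/2000 : ℝ))| = 917/2000 := by rw [abs_neg, abs_of_nonneg] ; norm_num
  rw [habs] at h
  simp only [Finset.sum_range_succ, Finset.sum_range_zero] at h
  norm_num [Nat.factorial] at h ⊢
  nlinarith [h]

theorem stmt_10
    (g G : ℝ → ℝ)
    (hg : ∀ x, g x = Real.exp (x - 1))
    (hG : ∀ x, G x = Real.exp (x - 1))
    (f : ℝ → ℝ → ℝ → ℝ)
    (hf : ∀ z₁ z₂ x, f z₁ z₂ x = G z₂ - G z₁ + (1 - g x) * (1 - z₁)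
      + (1 - z₂) * (G x - G 0) + z₁ * (1 - g 0)) :
    ∀ z₁ z₂ x : ℝ, 0 ≤ z₁ → z₁ ≤ z₂ → z₂ ≤ 1 → x ∈ Set.Icc (0:ℝ) 1 →
      f z₁ z₂ x ≥ 0.554 := by
  intro z₁ z₂ x h0 h12 h21 hx
  obtain ⟨hx0, hx1⟩ := hx
  rw [hf]
  simp only [hg, hG]
  have e1 : Real.exp 1 > 2.7182818283 := Real.exp_one_gt_d9
  have e2 : Real.exp 1 < 2.7182818286 := Real.exp_one_lt_d9
  have epos : (0:ℝ) < Real.exp 1 := Real.exp_pos 1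
  have hu : Real.exp ((0:ℝ) - 1) = (Real.exp 1)⁻¹ := by
    rw [show ((0:ℝ)-1) = -1 by norm_num, Real.exp_neg]
  -- bounds on u := exp(-1)
  have hu1 : Real.exp ((0:ℝ) - 1) ≤ 0.3678794412 := by
    rw [hu]
    rw [inv_le_comm₀ epos (by norm_num)]
    nlinarith
  have hu2 : Real.exp ((0:ℝ) - 1) ≥ 0.3678794411 := by
    rw [hu, ge_iff_le, le_inv_comm₀ (by norm_num) epos]
    nlinarith
  -- a := exp(x-1) ≤ 1
  have ha1 : Real.exp (x - 1) ≤ 1 := Real.exp_le_one_iff.mpr (by linarith)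
  have ha0 : Real.exp ((0:ℝ) - 1) ≤ Real.exp (x - 1) := Real.exp_le_exp.mpr (by linarith)
  -- convexity: exp(z₁-1) ≤ (1-z₁)*exp(-1) + z₁
  have hconv : Real.exp (z₁ - 1) ≤ (1 - z₁) * Real.exp ((0:ℝ) - 1) + z₁ := by
    have h1 : z₁ ≤ 1 := le_trans h12 h21
    have := convexOn_exp.2 (Set.mem_univ (-1 : ℝ)) (Set.mem_univ (0 : ℝ))
      (by linarith : (0:ℝ) ≤ 1 - z₁) h0 (by ring)
    simp only [smul_eq_mul] at this
    have harg : (1 - z₁) * (-1) + z₁ * 0 = z₁ - 1 := by ring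
    rw [harg, Real.exp_zero] at this
    calc Real.exp (z₁ - 1) ≤ (1 - z₁) * Real.exp (-1) + z₁ * 1 := this
      _ = (1 - z₁) * Real.exp ((0:ℝ) - 1) + z₁ := by norm_num
  -- tangent bound: exp(z₂-1) ≥ 0.6322311 * (z₂ + 917/2000)
  have htan : Real.exp (z₂ - 1) ≥ 0.6322311 * (z₂ + 917/2000) := by
    have hsplit : Real.exp (z₂ - 1) = Real.exp (-(917/2000:ℝ)) * Real.exp (z₂ - 1083/2000) := by
      rw [← Real.exp_add]; ring_nf
    have h1 : Real.exp (z₂ - 1083/2000) ≥ z₂ - 1083/2000 + 1 := by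
      have := Real.add_one_le_exp (z₂ - 1083/2000); linarith
    have h2 : Real.exp (-(917/2000 : ℝ)) ≥ 0.6322311 := exp_neg_lb
    have h3 : (0:ℝ) ≤ z₂ + 917/2000 := by linarith [le_trans h0 h12]
    rw [hsplit]
    have : 0.6322311 * (z₂ - 1083/2000 + 1)
        ≤ Real.exp (-(917/2000:ℝ)) * Real.exp (z₂ - 1083/2000) :=
      mul_le_mul h2 h1 (by linarith) (le_of_lt (Real.exp_pos _))
    linarith [this]
  have h01 : z₁ ≤ 1 := le_trans h12 h21
  have P1 : (0:ℝ) ≤ (1 - Real.exp (x - 1)) * (z₂ - z₁) :=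
    mul_nonneg (by linarith) (by linarith)
  have P3 : (0:ℝ) ≤ z₂ * (Real.exp ((0:ℝ) - 1) + 0.6322311 - 1) :=
    mul_nonneg (by linarith) (by linarith)
  clear hu e1 e2 epos hf hg hG hu2 ha0 ha1 h01 hx0 hx1 h0 h12 h21
  generalize Real.exp (x - 1) = a at *
  generalize Real.exp ((0:ℝ) - 1) = u at *
  generalize Real.exp (z₁ - 1) = X1 at *
  generalize Real.exp (z₂ - 1) = X2 at *
  nlinarith [htan, hconv, hu1, P1, P3]
end

section
/- Let β = 0.89. The convex function φ(z) = (1/β)(e^{β(z-1)} - e^{-β}) + ((1-e^{-β})/β)(1-z) attains its minimum on [0,1] at the unique point z* where e^{β(z*-1)} = (1-e^{-β})/β, and φ(z*) ≥ 0.5893. -/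
lemma exp_neg89_bounds :
    (0.4106557517 : ℝ) ≤ Real.exp (-0.89) ∧ Real.exp (-0.89) ≤ 0.4106557529 := by
  have h := Real.exp_bound (x := (-0.89:ℝ)) (by rw [abs_le]; constructor <;> norm_num)
    (n := 12) (by norm_num)
  rw [abs_le] at h
  obtain ⟨h1, h2⟩ := h
  have habs : |(-0.89:ℝ)| = 0.89 := by rw [abs_of_nonpos] <;> norm_num
  rw [habs] at h1 h2
  simp only [Finset.sum_range_succ, Finset.sum_range_zero] at h1 h2
  norm_num [Nat.factorial] at h1 h2
  constructor <;> nlinarith [h1, h2]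

lemma exp_L_lb : (0.66219 : ℝ) ≤ Real.exp (-0.4122) := by
  have h := Real.exp_bound (x := (-0.4122:ℝ)) (by rw [abs_le]; constructor <;> norm_num)
    (n := 10) (by norm_num)
  rw [abs_le] at h
  obtain ⟨h1, h2⟩ := h
  have habs : |(-0.4122:ℝ)| = 0.4122 := by rw [abs_of_nonpos] <;> norm_num
  rw [habs] at h1
  simp only [Finset.sum_range_succ, Finset.sum_range_zero] at h1
  norm_num [Nat.factorial] at h1
  nlinarith [h1]

theorem stmt_15 (β : ℝ) (hβ : β = 0.89)
    (φ : ℝ → ℝ)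
    (hφ : ∀ z, φ z = (1 / β) * (Real.exp (β * (z - 1)) - Real.exp (-β))
      + ((1 - Real.exp (-β)) / β) * (1 - z))
    (zstar : ℝ) (hzstar : zstar = 1 + (1 / β) * Real.log ((1 - Real.exp (-β)) / β)) :
    zstar ∈ Set.Icc (0:ℝ) 1 ∧
    Real.exp (β * (zstar - 1)) = (1 - Real.exp (-β)) / β ∧
    (∀ z ∈ Set.Icc (0:ℝ) 1,
      Real.exp (β * (z - 1)) = (1 - Real.exp (-β)) / β → z = zstar) ∧
    (∀ z ∈ Set.Icc (0:ℝ) 1, φ zstar ≤ φ z) ∧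
    φ zstar ≥ 0.5893 := by
  subst hβ
  obtain ⟨ht1, ht2⟩ := exp_neg89_bounds
  set t : ℝ := Real.exp (-0.89) with htdef
  set c : ℝ := (1 - t) / 0.89 with hcdef
  have hc1 : (0.6621845473 : ℝ) ≤ c := by
    rw [hcdef, le_div_iff₀ (by norm_num : (0:ℝ) < 0.89)]; linarith
  have hc2 : c ≤ 0.6621845487 := by
    rw [hcdef, div_le_iff₀ (by norm_num : (0:ℝ) < 0.89)]; linarith
  have hcpos : (0 : ℝ) < c := by linarith
  -- log bounds
  have hLu : Real.log c ≤ -0.4122 := by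
    rw [← Real.log_exp (-0.4122)]
    apply Real.log_le_log hcpos
    linarith [exp_L_lb]
  have hLl : (-0.89 : ℝ) ≤ Real.log c := by
    rw [← Real.log_exp (-0.89)]
    apply Real.log_le_log (Real.exp_pos _)
    linarith
  -- zstar formula
  have hz : zstar = 1 + Real.log c / 0.89 := by
    rw [hzstar]; ring
  -- exp at zstar
  have hexpz : Real.exp (0.89 * (zstar - 1)) = c := by
    have : 0.89 * (zstar - 1) = Real.log c := by rw [hz]; ring
    rw [this, Real.exp_log hcpos]
  refine ⟨⟨by rw [hz]; linarith, by rw [hz]; nlinarith⟩, hexpz, ?_, ?_, ?_⟩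
  · -- uniqueness
    intro z _ hzeq
    have : Real.exp (0.89 * (z - 1)) = Real.exp (0.89 * (zstar - 1)) := by
      rw [hzeq, hexpz]
    have h89 : (0.89 : ℝ) * (z - 1) = 0.89 * (zstar - 1) := Real.exp_injective this
    linarith
  · -- minimality
    intro z _
    rw [hφ, hφ]
    have hkey : c * (1 + 0.89 * (z - zstar)) ≤ Real.exp (0.89 * (z - 1)) := by
      have h1 : Real.exp (0.89 * (z - 1)) =
          c * Real.exp (0.89 * (z - zstar)) := by
        rw [← hexpz, ← Real.exp_add]; ring_nf
      rw [h1]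
      have := Real.add_one_le_exp (0.89 * (z - zstar))
      nlinarith [hcpos]
    rw [hexpz]
    nlinarith [hkey]
  · -- numeric lower bound
    rw [hφ zstar, hexpz]
    have h1z : 1 - zstar = -Real.log c / 0.89 := by rw [hz]; ring
    rw [h1z]
    have hprod : c * Real.log c ≤ 0.6621845473 * (-0.4122) := by
      nlinarith [hc1, hLu, hcpos]
    have : (1:ℝ)/0.89 * (c - t) + c * (-Real.log c / 0.89) =
        (c - t) / 0.89 - (c * Real.log c) / 0.89 := by ring
    rw [this]
    nlinarith [hprod, hc1, ht2]
end
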